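/- Let B be a fundamental domain for a lattice Λ in a locally compact abelian group G, and let ⌊·⌋_B : G → Λ be the function assigning to x ∈ G the unique λ ∈ Λ such that x = bλ for some b ∈ B. Then ⌊·⌋_B is locally constant on B°Λ and discontinuous at every point of the complement (∂B)Λ. -/

import Mathlib

open scoped Pointwise

/-- `B` is a fundamental domain for the subgroup `Λ` in `G`. -/
def IsFundDomain {G : Type*} [Group G] (Λ : Subgroup G) (B : Set G) : Prop :=
  ∀ x : G, ∃! p : B × Λ, x = (p.1 : G) * (p.2 : G)

/-- The generalized floor function `⌊·⌋_B : G → Λ` associated to a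
fundamental domain `B` of a lattice `Λ` is locally constant on `B°Λ` and discontinuous
at every point of the complement `(∂B)Λ = (B°Λ)ᶜ`. -/
theorem floor_locallyConstant_on_interior_mul_and_discontinuous_elsewhere
    {G : Type*} [CommGroup G] [TopologicalSpace G] [IsTopologicalGroup G]
    [LocallyCompactSpace G] [T2Space G]
    (Λ : Subgroup G) [DiscreteTopology Λ] [CompactSpace (G ⧸ Λ)]
    (B : Set G) (hB : IsFundDomain Λ B)
    (fl : G → Λ) (hfl : ∀ x : G, x * ((fl x : G))⁻¹ ∈ B) :
    (∀ x ∈ interior B * (Λ : Set G), ∀ᶠ y in nhds x, fl y = fl x) ∧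
    ((interior B * (Λ : Set G))ᶜ = frontier B * (Λ : Set G)) ∧
    (∀ x ∉ interior B * (Λ : Set G), ¬ ContinuousAt fl x) := by
  -- `fl` is determined by any decomposition `x = b * l`.
  have key : ∀ (x b : G) (l : Λ), b ∈ B → x = b * (l : G) → fl x = l := by
    intro x b l hb hx
    obtain ⟨p, _, hup⟩ := hB x
    have h1 : ((⟨b, hb⟩ : B), l) = p := hup (⟨b, hb⟩, l) hx
    have h2 : ((⟨x * ((fl x : G))⁻¹, hfl x⟩ : B), fl x) = p := hup _ (by group)
    have h3 := h1.trans h2.symm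
    exact (congrArg Prod.snd h3).symm
  -- if `b ∈ B` and `b * n ∈ B` for `n ∈ Λ` then `n = 1`.
  have tr : ∀ (b : G) (n : Λ), b ∈ B → b * (n : G) ∈ B → n = 1 := by
    intro b n hb hbn
    have e1 : fl (b * (n : G)) = n := key _ b n hb rfl
    have e2 : fl (b * (n : G)) = 1 := key _ (b * (n : G)) 1 hbn (by simp)
    exact e1.symm.trans e2
  -- if `c ∈ closure B` and `c * n ∈ interior B` then `c ∈ interior B`.
  have cl : ∀ (c : G) (n : Λ), c ∈ closure B → c * (n : G) ∈ interior B →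
      c ∈ interior B := by
    intro c n hc hcn
    have hcont : Continuous fun y : G => y * (n : G) := continuous_mul_right _
    have hV : IsOpen {y : G | y * (n : G) ∈ interior B} :=
      isOpen_interior.preimage hcont
    obtain ⟨b', hb'V, hb'B⟩ :=
      mem_closure_iff.mp hc _ hV hcn
    have hn : n = 1 := tr b' n hb'B (interior_subset hb'V)
    simpa [hn] using hcn
  -- disjointness of `B°Λ` and `(∂B)Λ`.
  have disj : ∀ x : G, x ∈ interior B * (Λ : Set G) →
      x ∈ frontier B * (Λ : Set G) → False := by
    rintro x ⟨b, hb, l, hl, rfl⟩ ⟨c, hc, m, hm, hcm⟩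
    have hmem : c * ((⟨m, hm⟩ * (⟨l, hl⟩ : Λ)⁻¹ : Λ) : G) ∈ interior B := by
      have : c * (m * l⁻¹) = b := by
        have h : c * m = b * l := hcm
        have : c * (m * l⁻¹) = (c * m) * l⁻¹ := by group
        rw [this, h]
        group
      simpa [this] using hb
    exact hc.2 (cl c _ hc.1 hmem)
  -- covering: every point lies in `B°Λ` or `(∂B)Λ`.
  have cover : ∀ x : G, x ∈ interior B * (Λ : Set G) ∨
      x ∈ frontier B * (Λ : Set G) := by
    intro x
    obtain ⟨⟨b, l⟩, hx, -⟩ := hB x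
    have hbcl : (b : G) ∈ closure B := subset_closure b.2
    rw [closure_eq_interior_union_frontier] at hbcl
    rcases hbcl with h | h
    · exact Or.inl ⟨b, h, l, l.2, hx.symm⟩
    · exact Or.inr ⟨b, h, l, l.2, hx.symm⟩
  refine ⟨?_, ?_, ?_⟩
  · -- local constancy on the interior part
    rintro x ⟨b, hb, l, hl, rfl⟩
    have hflx : fl (b * l) = ⟨l, hl⟩ := key _ b ⟨l, hl⟩ (interior_subset hb) rfl
    have hcont : Continuous fun y : G => y * l⁻¹ := continuous_mul_right _
    have hnh : {y : G | y * l⁻¹ ∈ interior B} ∈ nhds (b * l) := by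
      refine (isOpen_interior.preimage hcont).mem_nhds ?_
      simpa using hb
    filter_upwards [hnh] with y hy
    have : fl y = ⟨l, hl⟩ := by
      refine key y (y * l⁻¹) ⟨l, hl⟩ (interior_subset hy) (by group)
    rw [this, hflx]
  · -- complement identity
    ext x
    constructor
    · intro hx
      exact (cover x).resolve_left hx
    · intro hx hx'
      exact disj x hx' hx
  · -- discontinuity on the boundary part
    intro x hx hcont
    set l := fl x with hl
    have hmem : {l} ∈ nhds l := by simp [nhds_discrete]
    have hU : {y : G | fl y = l} ∈ nhds x := hcont hmem
    have htend : Filter.Tendsto (fun z : G => z * (l : G))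
        (nhds (x * (l : G)⁻¹)) (nhds x) := by
      have := (continuous_mul_right (l : G)).tendsto (x * (l : G)⁻¹)
      simpa using this
    have hBnh : B ∈ nhds (x * (l : G)⁻¹) := by
      filter_upwards [htend hU] with z hz
      have h2 : z * (l : G) * ((fl (z * (l : G)) : G))⁻¹ ∈ B := hfl _
      rw [hz] at h2
      simpa using h2
    have : x * (l : G)⁻¹ ∈ interior B := mem_interior_iff_mem_nhds.mpr hBnh
    exact hx ⟨x * (l : G)⁻¹, this, l, l.2, by group⟩
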